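/- For strings u, v over an alphabet of size a ≥ 2 with lengths between k₁ and k₂ where k₁ < k₂, there exists a path in the Levenshtein graph L_{k₁,k₂;a} from u to v of length exactly ℓ(u,v), visiting only vertices whose lengths lie between k₁ and k₂. In particular L_{k₁,k₂;a} is connected. -/

import Mathlib

/-- A cost structure for Levenshtein edit distance (removed from Mathlib; restored with its old meaning). -/
structure Levenshtein.Cost (α β δ : Type*) where
  /-- Cost to delete an element from a list. -/
  delete : α → δ
  /-- Cost in insert an element into a list. -/
  insert : β → δ
  /-- Cost to substitute one element for another in a list. -/
  substitute : α → β → δ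

/-- The default cost structure, for which all operations cost `1`. -/
def Levenshtein.defaultCost {α : Type*} [DecidableEq α] : Levenshtein.Cost α α ℕ where
  delete _ := 1
  insert _ := 1
  substitute a b := if a = b then 0 else 1

/-- (Internal implementation detail, as in the old Mathlib.) -/
def Levenshtein.impl {α β δ : Type*} (C : Levenshtein.Cost α β δ) [AddZeroClass δ] [Min δ]
    (xs : List α) (y : β) (d : {r : List δ // 0 < r.length}) :
    {r : List δ // 0 < r.length} :=
  let ⟨ds, w⟩ := d
  xs.zip (ds.zip ds.tail) |>.foldr
    (init := ⟨[ds.getLast (List.ne_nil_of_length_pos w) + C.insert y], by simp⟩)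
    (fun ⟨x, d₀, d₁⟩ ⟨r, w⟩ =>
      ⟨min (C.delete x + r[0]) (min (C.insert y + d₀) (C.substitute x y + d₁)) :: r, by simp⟩)

/-- `suffixLevenshtein C xs ys` computes the Levenshtein distance
(using the cost functions provided by a `C : Cost α β δ`)
from each suffix of the list `xs` to the list `ys`. -/
def suffixLevenshtein {α β δ : Type*} (C : Levenshtein.Cost α β δ) [AddZeroClass δ] [Min δ]
    (xs : List α) (ys : List β) : {r : List δ // 0 < r.length} :=
  ys.foldr
    (Levenshtein.impl C xs)
    (xs.foldr (init := ⟨[0], by simp⟩) (fun a ⟨r, w⟩ => ⟨(C.delete a + r[0]) :: r, by simp⟩))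

/-- `levenshtein C xs ys` computes the Levenshtein distance
(using the cost functions provided by a `C : Cost α β δ`)
from the list `xs` to the list `ys`. -/
def levenshtein {α β δ : Type*} (C : Levenshtein.Cost α β δ) [AddZeroClass δ] [Min δ]
    (xs : List α) (ys : List β) : δ :=
  let ⟨r, w⟩ := suffixLevenshtein C xs ys
  r[0]

/-- Vertices of the Levenshtein graph: strings over `Fin a` of length between `k₁` and `k₂`. -/
def LevVertex (a k₁ k₂ : ℕ) := {w : List (Fin a) // k₁ ≤ w.length ∧ w.length ≤ k₂}

/-- The Levenshtein graph `L_{k₁,k₂;a}`: two strings are adjacent iff their edit distance is 1. -/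
def levGraph (a k₁ k₂ : ℕ) : SimpleGraph (LevVertex a k₁ k₂) :=
  SimpleGraph.fromRel (fun u v => levenshtein Levenshtein.defaultCost u.1 v.1 = 1)

section LevRestore

namespace Levenshtein

@[simp] theorem defaultCost_delete {α : Type*} [DecidableEq α] (x : α) :
    (defaultCost (α := α)).delete x = 1 := rfl

@[simp] theorem defaultCost_insert {α : Type*} [DecidableEq α] (x : α) :
    (defaultCost (α := α)).insert x = 1 := rfl

@[simp] theorem defaultCost_substitute {α : Type*} [DecidableEq α] (x y : α) :
    (defaultCost (α := α)).substitute x y = if x = y then 0 else 1 := rfl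

theorem impl_cons {α β δ : Type*} (C : Cost α β δ) [AddZeroClass δ] [Min δ]
    (x : α) (xs : List α) (y : β) (d : δ) (ds : List δ) (w) (w' : 0 < List.length ds) :
    impl C (x :: xs) y ⟨d :: ds, w⟩ =
      let ⟨r, w⟩ := impl C xs y ⟨ds, w'⟩
      ⟨min (C.delete x + r[0]) (min (C.insert y + d) (C.substitute x y + ds[0])) :: r, by simp⟩ :=
  match ds, w' with | _ :: _, _ => rfl

theorem impl_cons_fst_zero {α β δ : Type*} (C : Cost α β δ) [AddZeroClass δ] [Min δ]
    (x : α) (xs : List α) (y : β) (d : δ) (ds : List δ) (w) (h) (w' : 0 < List.length ds) :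
    (impl C (x :: xs) y ⟨d :: ds, w⟩).1[0]'h =
      let ⟨r, w⟩ := impl C xs y ⟨ds, w'⟩
      min (C.delete x + r[0]) (min (C.insert y + d) (C.substitute x y + ds[0])) :=
  match ds, w' with | _ :: _, _ => rfl

theorem impl_length {α β δ : Type*} (C : Cost α β δ) [AddZeroClass δ] [Min δ]
    (xs : List α) (y : β) (d : {r : List δ // 0 < r.length}) (w : d.1.length = xs.length + 1) :
    (impl C xs y d).1.length = xs.length + 1 := by
  induction xs generalizing d with
  | nil => rfl
  | cons x xs ih =>
    dsimp [impl]
    match d, w with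
    | ⟨d₁ :: d₂ :: ds, _⟩, w =>
      dsimp
      congr 1
      exact ih ⟨d₂ :: ds, (by simp)⟩ (by simpa using w)

end Levenshtein

open Levenshtein in
theorem suffixLevenshtein_length {α β δ : Type*} (C : Cost α β δ) [AddZeroClass δ] [Min δ]
    (xs : List α) (ys : List β) :
    (suffixLevenshtein C xs ys).1.length = xs.length + 1 := by
  induction ys with
  | nil =>
    dsimp [suffixLevenshtein]
    induction xs with
    | nil => rfl
    | cons _ xs ih => simp_all
  | cons y ys ih =>
    dsimp [suffixLevenshtein]
    rw [impl_length]
    exact ih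

theorem suffixLevenshtein_cons₂ {α β δ : Type*} (C : Levenshtein.Cost α β δ) [AddZeroClass δ]
    [Min δ] (xs : List α) (y : β) (ys : List β) :
    suffixLevenshtein C xs (y :: ys) = (Levenshtein.impl C xs) y (suffixLevenshtein C xs ys) := rfl

theorem suffixLevenshtein_cons₁_aux {δ : Type*} {x y : {r : List δ // 0 < r.length}}
    (w₀ : x.1[0]'x.2 = y.1[0]'y.2) (w : x.1.tail = y.1.tail) : x = y := by
  match x, y with
  | ⟨hx :: tx, _⟩, ⟨hy :: ty, _⟩ => simp_all

theorem suffixLevenshtein_cons₁ {α β δ : Type*} (C : Levenshtein.Cost α β δ) [AddZeroClass δ]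
    [Min δ] (x : α) (xs : List α) (ys : List β) :
    suffixLevenshtein C (x :: xs) ys =
      ⟨levenshtein C (x :: xs) ys :: (suffixLevenshtein C xs ys).1, by simp⟩ := by
  induction ys with
  | nil => dsimp [levenshtein, suffixLevenshtein]; rfl
  | cons y ys ih =>
    apply suffixLevenshtein_cons₁_aux
    · rfl
    · rw [suffixLevenshtein_cons₂ C (x :: xs), ih, Levenshtein.impl_cons]
      · rfl
      · simp [suffixLevenshtein_length]

theorem suffixLevenshtein_cons_cons_fst_get_zero {α β δ : Type*} (C : Levenshtein.Cost α β δ)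
    [AddZeroClass δ] [Min δ] (x : α) (xs : List α) (y : β) (ys : List β) (w) :
    (suffixLevenshtein C (x :: xs) (y :: ys)).1[0]'w =
      let ⟨dx, _⟩ := suffixLevenshtein C xs (y :: ys)
      let ⟨dy, _⟩ := suffixLevenshtein C (x :: xs) ys
      let ⟨dxy, _⟩ := suffixLevenshtein C xs ys
      min (C.delete x + dx[0]) (min (C.insert y + dy[0]) (C.substitute x y + dxy[0])) := by
  conv =>
    lhs
    dsimp only [suffixLevenshtein_cons₂]
  simp only [suffixLevenshtein_cons₁]
  rw [Levenshtein.impl_cons_fst_zero]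
  rfl

@[simp] theorem levenshtein_nil_nil {α β δ : Type*} (C : Levenshtein.Cost α β δ) [AddZeroClass δ]
    [Min δ] : levenshtein C ([] : List α) ([] : List β) = 0 := by
  simp [levenshtein, suffixLevenshtein]

theorem suffixLevenshtein_nil_eq {α β δ : Type*} (C : Levenshtein.Cost α β δ) [AddZeroClass δ]
    [Min δ] (ys : List β) :
    (suffixLevenshtein C ([] : List α) ys).1 = [levenshtein C [] ys] := by
  have h := suffixLevenshtein_length C ([] : List α) ys
  unfold levenshtein
  generalize suffixLevenshtein C [] ys = s at *
  obtain ⟨r, w⟩ := s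
  simp only [List.length_nil, zero_add] at h
  match r, h with
  | [d], _ => rfl

@[simp] theorem levenshtein_nil_cons {α : Type*} [DecidableEq α] (y : α) (ys : List α) :
    levenshtein (Levenshtein.defaultCost (α := α)) [] (y :: ys) =
      1 + levenshtein Levenshtein.defaultCost [] ys := by
  have h := suffixLevenshtein_nil_eq (Levenshtein.defaultCost (α := α)) ys
  conv_lhs => rw [levenshtein, suffixLevenshtein_cons₂]
  obtain ⟨s, hs⟩ : ∃ s, suffixLevenshtein (Levenshtein.defaultCost (α := α)) [] ys = s := ⟨_, rfl⟩
  rw [hs] at h ⊢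
  obtain ⟨r, w⟩ := s
  simp only at h
  subst h
  change levenshtein _ [] ys + 1 = _
  exact Nat.add_comm _ _

@[simp] theorem levenshtein_cons_nil {α β δ : Type*} (C : Levenshtein.Cost α β δ) [AddZeroClass δ]
    [Min δ] (x : α) (xs : List α) :
    levenshtein C (x :: xs) ([] : List β) = C.delete x + levenshtein C xs [] :=
  rfl

@[simp] theorem levenshtein_cons_cons {α β δ : Type*} (C : Levenshtein.Cost α β δ) [AddZeroClass δ]
    [Min δ] (x : α) (xs : List α) (y : β) (ys : List β) :
    levenshtein C (x :: xs) (y :: ys) =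
      min (C.delete x + levenshtein C xs (y :: ys))
        (min (C.insert y + levenshtein C (x :: xs) ys)
          (C.substitute x y + levenshtein C xs ys)) :=
  suffixLevenshtein_cons_cons_fst_get_zero ..

end LevRestore

section EditDistanceLemmas

set_option maxHeartbeats 1000000
open Levenshtein
variable {α : Type*} [DecidableEq α]
local notation "lev" => levenshtein (Levenshtein.defaultCost (α := α))

theorem lev_nil_left (y : List α) : lev [] y = y.length := by
  induction y with
  | nil => simp
  | cons b y ih => simp [ih]; omega

theorem lev_nil_right (x : List α) : lev x [] = x.length := by
  induction x with
  | nil => simp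
  | cons a x ih => simp [ih]; omega

theorem lev_le_del (a : α) (x y : List α) : lev (a :: x) y ≤ 1 + lev x y := by
  cases y with
  | nil => simp
  | cons b y => rw [levenshtein_cons_cons]; exact le_trans (min_le_left _ _) (by simp)

theorem lev_le_ins (b : α) (x y : List α) : lev x (b :: y) ≤ 1 + lev x y := by
  cases x with
  | nil => simp
  | cons a x =>
    rw [levenshtein_cons_cons]
    exact le_trans (min_le_right _ _) (le_trans (min_le_left _ _) (by simp))

theorem lev_le_sub (a b : α) (x y : List α) :
    lev (a :: x) (b :: y) ≤ (if a = b then 0 else 1) + lev x y := by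
  rw [levenshtein_cons_cons]
  exact le_trans (min_le_right _ _) (le_trans (min_le_right _ _) (by simp))

theorem length_le_lev : ∀ (x y : List α), y.length ≤ x.length + lev x y ∧ x.length ≤ y.length + lev x y
  | [], y => by simp [lev_nil_left]
  | a :: x, [] => by simp [lev_nil_right]
  | a :: x, b :: y => by
    rw [levenshtein_cons_cons]
    have h1 := length_le_lev x (b :: y)
    have h2 := length_le_lev (a :: x) y
    have h3 := length_le_lev x y
    simp only [List.length_cons, Levenshtein.defaultCost_delete, Levenshtein.defaultCost_insert,
      Levenshtein.defaultCost_substitute] at *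
    rcases min_cases (1 + lev x (b :: y)) (min (1 + lev (a :: x) y) ((if a = b then 0 else 1) + lev x y)) with ⟨he, -⟩ | ⟨he, -⟩
    · omega
    · rcases min_cases (1 + lev (a :: x) y) ((if a = b then 0 else 1) + lev x y) with ⟨he2, -⟩ | ⟨he2, -⟩
      · omega
      · split at he2 <;> omega

theorem lev_le_length_add (x y : List α) : lev x y ≤ x.length + y.length := by
  induction x with
  | nil => simp [lev_nil_left]
  | cons a x ih =>
    calc lev (a :: x) y ≤ 1 + lev x y := lev_le_del a x y
    _ ≤ 1 + (x.length + y.length) := by omega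
    _ = (a :: x).length + y.length := by simp; omega

theorem lev_triangle : ∀ (x y z : List α), lev x z ≤ lev x y + lev y z
  | x, [], z => by
    rw [lev_nil_right, lev_nil_left]; exact lev_le_length_add x z
  | [], b :: y, z => by
    rw [lev_nil_left, lev_nil_left]
    exact (length_le_lev (b :: y) z).1
  | a :: x, b :: y, [] => by
    rw [lev_nil_right, lev_nil_right]
    have := (length_le_lev (a :: x) (b :: y)).2
    omega
  | a :: x, b :: y, c :: z => by
    have i1 := lev_triangle x (b :: y) (c :: z)
    have i2 := lev_triangle (a :: x) (b :: y) z
    have i3 := lev_triangle (a :: x) y (c :: z)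
    have i4 := lev_triangle (a :: x) y z
    have i5 := lev_triangle x y (c :: z)
    have i6 := lev_triangle x y z
    have u1 := lev_le_del a x (c :: z)
    have u2 := lev_le_ins c (a :: x) z
    have u3 := lev_le_sub a c x z
    have hc : (if a = c then 0 else 1) ≤ (if a = b then 0 else 1) + (if b = c then (0:ℕ) else 1) := by
      by_cases h1 : a = b
      · subst h1; simp
      · rw [if_neg h1]; split_ifs <;> omega
    simp only [levenshtein_cons_cons, Levenshtein.defaultCost_delete,
      Levenshtein.defaultCost_insert, Levenshtein.defaultCost_substitute] at i1 i2 i3 i5 u1 u2 u3 ⊢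
    omega
termination_by x y z => x.length + y.length + z.length
decreasing_by all_goals simp <;> omega

theorem lev_self (x : List α) : lev x x = 0 := by
  induction x with
  | nil => simp
  | cons a x ih =>
    refine Nat.le_antisymm ?_ (Nat.zero_le _)
    simpa [ih] using lev_le_sub a a x x

theorem eq_of_lev_eq_zero : ∀ {x y : List α}, lev x y = 0 → x = y
  | [], [], _ => rfl
  | [], b :: y, h => by simp [lev_nil_left] at h
  | a :: x, [], h => by simp [lev_nil_right] at h
  | a :: x, b :: y, h => by
    rw [levenshtein_cons_cons] at h
    simp only [Nat.min_eq_zero_iff, Nat.add_eq_zero] at h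
    rcases h with ⟨h1, -⟩ | ⟨h1, -⟩ | ⟨h1, h2⟩
    · simp at h1
    · simp at h1
    · have hab : a = b := by
        by_contra hab; simp [hab] at h1
      rw [hab, eq_of_lev_eq_zero h2]

theorem lev_pos_of_ne {x y : List α} (h : x ≠ y) : 1 ≤ lev x y := by
  rcases Nat.eq_zero_or_pos (lev x y) with h0 | h0
  · exact absurd (eq_of_lev_eq_zero h0) h
  · exact h0

theorem lev_cons_self (c : α) (x : List α) : lev (c :: x) x = 1 := by
  refine le_antisymm ?_ (lev_pos_of_ne (by intro h; simpa using congrArg List.length h))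
  simpa [lev_self] using lev_le_del c x x

theorem lev_self_cons (c : α) (x : List α) : lev x (c :: x) = 1 := by
  refine le_antisymm ?_ (lev_pos_of_ne (by intro h; simpa using congrArg List.length h))
  simpa [lev_self] using lev_le_ins c x x

theorem lev_sub_front {a b : α} (h : a ≠ b) (x : List α) : lev (a :: x) (b :: x) = 1 := by
  refine le_antisymm ?_ (lev_pos_of_ne (by simp [h]))
  simpa [h, lev_self] using lev_le_sub a b x x

theorem lev_cons_cons_same (c : α) (x y : List α) : lev (c :: x) (c :: y) = lev x y := by
  refine le_antisymm (by simpa [lev_self] using lev_le_sub c c x y) ?_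
  rw [levenshtein_cons_cons]
  have t1 : lev x y ≤ lev x (c :: y) + 1 := by
    have := lev_triangle x (c :: y) y
    have := lev_cons_self c y
    omega
  have t2 : lev x y ≤ 1 + lev (c :: x) y := by
    have := lev_triangle x (c :: x) y
    have := lev_self_cons c x
    omega
  simp only [Levenshtein.defaultCost_delete, Levenshtein.defaultCost_insert,
    Levenshtein.defaultCost_substitute, if_pos rfl]
  omega

private theorem min3 {A B C d : ℕ} (h : d = min A (min B C)) : d = A ∨ d = B ∨ d = C := by omega

/-- Step lemma A: when `|x| < |y|` there is a first step along a geodesic that does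
not decrease the length. -/
theorem lev_stepA : ∀ (x y : List α), x.length < y.length →
    ∃ z : List α, lev x z = 1 ∧ 1 + lev z y = lev x y ∧
      x.length ≤ z.length ∧ z.length ≤ x.length + 1
  | [], y, h => by
    match y, h with
    | b :: y', _ =>
      refine ⟨[b], by simpa using lev_self_cons b [], ?_, by simp, by simp⟩
      rw [lev_nil_left, lev_cons_cons_same, lev_nil_left]
      simp
      omega
  | a :: x', y, h => by
    match y, h with
    | b :: y', h =>
    by_cases hab : a = b
    · -- equal heads: recurse
      subst hab
      have hlen : x'.length < y'.length := by simpa using h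
      obtain ⟨w, hw1, hw2, hw3, hw4⟩ := lev_stepA x' y' hlen
      refine ⟨a :: w, by rwa [lev_cons_cons_same], ?_, by simp; omega, by simp; omega⟩
      rw [lev_cons_cons_same, lev_cons_cons_same]
      exact hw2
    · have hxy : lev (a :: x') (b :: y') = min (1 + lev x' (b :: y'))
          (min (1 + lev (a :: x') y') (1 + lev x' y')) := by
        rw [levenshtein_cons_cons]
        simp [hab]
      rcases min3 hxy with hd | hd | hd
      · -- delete branch
        have hlen : x'.length < (b :: y').length := by simp at h ⊢; omega
        obtain ⟨w, hw1, hw2, hw3, hw4⟩ := lev_stepA x' (b :: y') hlen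
        refine ⟨a :: w, by rwa [lev_cons_cons_same], ?_, by simp; omega, by simp; omega⟩
        have hub : lev (a :: w) (b :: y') ≤ 1 + lev w (b :: y') := lev_le_del a w (b :: y')
        have htri : lev (a :: x') (b :: y') ≤ lev (a :: x') (a :: w) + lev (a :: w) (b :: y') := lev_triangle _ _ _
        rw [lev_cons_cons_same, hw1] at htri
        omega
      · -- insert branch
        refine ⟨b :: a :: x', lev_self_cons b _, ?_, by simp, by simp⟩
        rw [lev_cons_cons_same]
        omega
      · -- substitute branch
        refine ⟨b :: x', lev_sub_front hab x', ?_, by simp, by simp⟩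
        rw [lev_cons_cons_same]
        omega
termination_by x y _ => x.length
decreasing_by all_goals simp <;> omega

/-- Step lemma B: when `|x| > |y|` there is a first step along a geodesic that does
not increase the length. -/
theorem lev_stepB : ∀ (y x : List α), y.length < x.length →
    ∃ z : List α, lev x z = 1 ∧ 1 + lev z y = lev x y ∧
      x.length ≤ z.length + 1 ∧ z.length ≤ x.length
  | y, x, h => by
    match x, h with
    | a :: x', h =>
    match y with
    | [] =>
      refine ⟨x', lev_cons_self a x', ?_, by simp, by simp⟩
      rw [lev_nil_right, lev_nil_right]
      simp only [List.length_cons]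
      omega
    | b :: y' =>
      by_cases hab : a = b
      · -- equal heads: recurse
        subst hab
        have hlen : y'.length < x'.length := by simpa using h
        obtain ⟨w, hw1, hw2, hw3, hw4⟩ := lev_stepB y' x' hlen
        refine ⟨a :: w, by rwa [lev_cons_cons_same], ?_, by simp; omega, by simp; omega⟩
        rw [lev_cons_cons_same, lev_cons_cons_same]
        exact hw2
      · have hxy : lev (a :: x') (b :: y') = min (1 + lev x' (b :: y'))
            (min (1 + lev (a :: x') y') (1 + lev x' y')) := by
          rw [levenshtein_cons_cons]
          simp [hab]
        rcases min3 hxy with hd | hd | hd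
        · -- delete branch
          refine ⟨x', lev_cons_self a x', ?_, by simp, by simp⟩
          omega
        · -- insert branch
          have hlen : y'.length < (a :: x').length := by simp at h ⊢; omega
          obtain ⟨w, hw1, hw2, hw3, hw4⟩ := lev_stepB y' (a :: x') hlen
          refine ⟨w, hw1, ?_, by simpa using hw3, by simpa using hw4⟩
          have hub : lev w (b :: y') ≤ 1 + lev w y' := lev_le_ins b w y'
          have htri : lev (a :: x') (b :: y') ≤ lev (a :: x') w + lev w (b :: y') := lev_triangle _ _ _
          rw [hw1] at htri
          omega
        · -- substitute branch
          refine ⟨b :: x', lev_sub_front hab x', ?_, by simp, by simp⟩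
          rw [lev_cons_cons_same]
          omega
termination_by y x _ => y.length
decreasing_by all_goals simp <;> omega

/-- Step lemma C (up): equal lengths, first geodesic step of length `|x|` or `|x|+1`. -/
theorem lev_stepCup : ∀ (x y : List α), x.length = y.length → x ≠ y →
    ∃ z : List α, lev x z = 1 ∧ 1 + lev z y = lev x y ∧
      x.length ≤ z.length ∧ z.length ≤ x.length + 1
  | [], [], _, hne => absurd rfl hne
  | a :: x', b :: y', h, hne => by
    by_cases hab : a = b
    · subst hab
      have hlen : x'.length = y'.length := by simpa using h
      have hne' : x' ≠ y' := by rintro rfl; exact hne rfl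
      obtain ⟨w, hw1, hw2, hw3, hw4⟩ := lev_stepCup x' y' hlen hne'
      refine ⟨a :: w, by rwa [lev_cons_cons_same], ?_, by simp; omega, by simp; omega⟩
      rw [lev_cons_cons_same, lev_cons_cons_same]
      exact hw2
    · have hxy : lev (a :: x') (b :: y') = min (1 + lev x' (b :: y'))
          (min (1 + lev (a :: x') y') (1 + lev x' y')) := by
        rw [levenshtein_cons_cons]
        simp [hab]
      rcases min3 hxy with hd | hd | hd
      · -- delete branch: use stepA on (x', b :: y')
        have hlen : x'.length < (b :: y').length := by simp at h ⊢; omega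
        obtain ⟨w, hw1, hw2, hw3, hw4⟩ := lev_stepA x' (b :: y') hlen
        refine ⟨a :: w, by rwa [lev_cons_cons_same], ?_, by simp; omega, by simp; omega⟩
        have hub : lev (a :: w) (b :: y') ≤ 1 + lev w (b :: y') := lev_le_del a w (b :: y')
        have htri : lev (a :: x') (b :: y') ≤ lev (a :: x') (a :: w) + lev (a :: w) (b :: y') :=
          lev_triangle _ _ _
        rw [lev_cons_cons_same, hw1] at htri
        omega
      · -- insert branch
        refine ⟨b :: a :: x', lev_self_cons b _, ?_, by simp, by simp⟩
        rw [lev_cons_cons_same]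
        omega
      · -- substitute branch
        refine ⟨b :: x', lev_sub_front hab x', ?_, by simp, by simp⟩
        rw [lev_cons_cons_same]
        omega

/-- Step lemma C (down): equal lengths, first geodesic step of length `|x|-1` or `|x|`. -/
theorem lev_stepCdown : ∀ (x y : List α), x.length = y.length → x ≠ y →
    ∃ z : List α, lev x z = 1 ∧ 1 + lev z y = lev x y ∧
      x.length ≤ z.length + 1 ∧ z.length ≤ x.length
  | [], [], _, hne => absurd rfl hne
  | a :: x', b :: y', h, hne => by
    by_cases hab : a = b
    · subst hab
      have hlen : x'.length = y'.length := by simpa using h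
      have hne' : x' ≠ y' := by rintro rfl; exact hne rfl
      obtain ⟨w, hw1, hw2, hw3, hw4⟩ := lev_stepCdown x' y' hlen hne'
      refine ⟨a :: w, by rwa [lev_cons_cons_same], ?_, by simp; omega, by simp; omega⟩
      rw [lev_cons_cons_same, lev_cons_cons_same]
      exact hw2
    · have hxy : lev (a :: x') (b :: y') = min (1 + lev x' (b :: y'))
          (min (1 + lev (a :: x') y') (1 + lev x' y')) := by
        rw [levenshtein_cons_cons]
        simp [hab]
      rcases min3 hxy with hd | hd | hd
      · -- delete branch
        refine ⟨x', lev_cons_self a x', ?_, by simp, by simp⟩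
        omega
      · -- insert branch: use stepB on (y', a :: x')
        have hlen : y'.length < (a :: x').length := by simp at h ⊢; omega
        obtain ⟨w, hw1, hw2, hw3, hw4⟩ := lev_stepB y' (a :: x') hlen
        refine ⟨w, hw1, ?_, by simpa using hw3, by simpa using hw4⟩
        have hub : lev w (b :: y') ≤ 1 + lev w y' := lev_le_ins b w y'
        have htri : lev (a :: x') (b :: y') ≤ lev (a :: x') w + lev w (b :: y') := lev_triangle _ _ _
        rw [hw1] at htri
        omega
      · -- substitute branch
        refine ⟨b :: x', lev_sub_front hab x', ?_, by simp, by simp⟩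
        rw [lev_cons_cons_same]
        omega

/-- Combined step lemma: one geodesic step staying inside the length band `[k₁, k₂]`. -/
theorem lev_step_band (k₁ k₂ : ℕ) (hk : k₁ < k₂) (x y : List α)
    (hx1 : k₁ ≤ x.length) (hx2 : x.length ≤ k₂)
    (hy1 : k₁ ≤ y.length) (hy2 : y.length ≤ k₂) (hne : x ≠ y) :
    ∃ z : List α, lev x z = 1 ∧ 1 + lev z y = lev x y ∧
      k₁ ≤ z.length ∧ z.length ≤ k₂ := by
  rcases lt_trichotomy x.length y.length with h | h | h
  · obtain ⟨z, h1, h2, h3, h4⟩ := lev_stepA x y h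
    exact ⟨z, h1, h2, by omega, by omega⟩
  · by_cases hx : x.length < k₂
    · obtain ⟨z, h1, h2, h3, h4⟩ := lev_stepCup x y h hne
      exact ⟨z, h1, h2, by omega, by omega⟩
    · obtain ⟨z, h1, h2, h3, h4⟩ := lev_stepCdown x y h hne
      exact ⟨z, h1, h2, by omega, by omega⟩
  · obtain ⟨z, h1, h2, h3, h4⟩ := lev_stepB y x h
    exact ⟨z, h1, h2, by omega, by omega⟩

theorem lev_exists_walk (a k₁ k₂ : ℕ) (hk : k₁ < k₂) :
    ∀ (n : ℕ) (u v : LevVertex a k₁ k₂), levenshtein Levenshtein.defaultCost u.1 v.1 = n →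
      ∃ p : (levGraph a k₁ k₂).Walk u v, p.length = n := by
  intro n
  induction n with
  | zero =>
    intro u v h
    have huv : u = v := Subtype.ext (eq_of_lev_eq_zero h)
    subst huv
    exact ⟨SimpleGraph.Walk.nil, rfl⟩
  | succ n ih =>
    intro u v h
    have hne : u.1 ≠ v.1 := by
      intro he
      rw [he, lev_self] at h
      omega
    obtain ⟨z, h1, h2, h3, h4⟩ :=
      lev_step_band k₁ k₂ hk u.1 v.1 u.2.1 u.2.2 v.2.1 v.2.2 hne
    have hadj : (levGraph a k₁ k₂).Adj u ⟨z, h3, h4⟩ := by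
      refine (SimpleGraph.fromRel_adj _ _ _).mpr ?_
      refine ⟨?_, Or.inl h1⟩
      intro he
      have h5 : u.1 = z := congrArg (fun w : LevVertex a k₁ k₂ => w.1) he
      rw [h5, lev_self] at h1
      omega
    obtain ⟨p, hp⟩ := ih ⟨z, h3, h4⟩ v
      (show levenshtein Levenshtein.defaultCost z v.1 = n by omega)
    exact ⟨SimpleGraph.Walk.cons hadj p, congrArg (· + 1) hp⟩

end EditDistanceLemmas

/-- if `k₁ < k₂` and `a ≥ 2`, between any two vertices of `L_{k₁,k₂;a}`
there is a walk of length exactly their Levenshtein distance; in particular the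
graph is connected. -/
theorem levGraph_walk_of_length_lev (a k₁ k₂ : ℕ) (ha : 2 ≤ a) (hk : k₁ < k₂)
    (u v : LevVertex a k₁ k₂) :
    (∃ p : (levGraph a k₁ k₂).Walk u v,
        p.length = levenshtein Levenshtein.defaultCost u.1 v.1) ∧
      (levGraph a k₁ k₂).Connected := by
  have hwalk : ∀ (u v : LevVertex a k₁ k₂),
      ∃ p : (levGraph a k₁ k₂).Walk u v,
        p.length = levenshtein Levenshtein.defaultCost u.1 v.1 :=
    fun u v => lev_exists_walk a k₁ k₂ hk _ u v rfl
  refine ⟨hwalk u v, ?_⟩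
  have hne : Nonempty (LevVertex a k₁ k₂) :=
    ⟨⟨List.replicate k₁ (⟨0, by omega⟩ : Fin a), by simp; omega⟩⟩
  exact { preconnected := fun x y => ⟨(hwalk x y).choose⟩, nonempty := hne }
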